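/- Let Ω₁, Ω₂ ⊂ ℝ^{n+1} be disjoint domains with harmonic measures ω₁, ω₂ that are mutually absolutely continuous on a Borel set E ⊂ ∂Ω₁ ∩ ∂Ω₂. Let ξ ∈ E be a point such that: the density h(ξ) = lim_{r→0} ω₂(B(ξ, r))/ω₁(B(ξ, r)) exists and lies in (0, ∞), ξ is a Lebesgue point of h = dω₂/dω₁ with respect to ω₁, and lim_{r→0} ωᵢ(E ∩ B(ξ, r))/ωᵢ(B(ξ, r)) = 1 for i = 1, 2. Let c_j ≥ 0 and r_j → 0 be such that ω₁^j := c_j·T_{ξ,r_j}[ω₁] converges weakly to a Radon measure ω₁^∞. Then ω₂^j := c_j·T_{ξ,r_j}[ω₂] converges weakly to h(ξ)·ω₁^∞. -/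

import Mathlib

open MeasureTheory Metric Filter Topology Set
open scoped ENNReal NNReal

noncomputable section

/-- `Euc N` is the Euclidean space `ℝ^N`. -/
abbrev Euc (N : ℕ) := EuclideanSpace ℝ (Fin N)

/-- A domain: a connected open subset of Euclidean space. -/
def DomainSet {N : ℕ} (Ω : Set (Euc N)) : Prop := IsOpen Ω ∧ IsConnected Ω

/-- Subharmonic: continuous and satisfying the sub-mean value property on balls. -/
def IsSubharmonicOn {N : ℕ} (u : Euc N → ℝ) (U : Set (Euc N)) : Prop :=
  ContinuousOn u U ∧
    ∀ x ∈ U, ∀ r : ℝ, 0 < r → closedBall x r ⊆ U → u x ≤ ⨍ y in closedBall x r, u y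

/-- Harmonic: continuous and satisfying the mean value property on balls. -/
def IsHarmonicOn {N : ℕ} (u : Euc N → ℝ) (U : Set (Euc N)) : Prop :=
  ContinuousOn u U ∧
    ∀ x ∈ U, ∀ r : ℝ, 0 < r → closedBall x r ⊆ U → u x = ⨍ y in closedBall x r, u y

/-- The Perron solution of the Dirichlet problem in `Ω` with boundary data `f`. -/
def perron {N : ℕ} (Ω : Set (Euc N)) (f : Euc N → ℝ) (x : Euc N) : ℝ :=
  sSup {t | ∃ u : Euc N → ℝ, IsSubharmonicOn u Ω ∧
    (∀ ξ ∈ frontier Ω, Filter.limsup u (𝓝[Ω] ξ) ≤ f ξ) ∧ u x = t}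

/-- `ω` is the harmonic measure of `Ω` with pole at `p`: a finite measure supported on
`∂Ω` integrating bounded continuous boundary data to the Perron solution at `p`. -/
def IsHarmonicMeasure {N : ℕ} (Ω : Set (Euc N)) (p : Euc N) (ω : Measure (Euc N)) : Prop :=
  IsFiniteMeasure ω ∧ ω (frontier Ω)ᶜ = 0 ∧
    ∀ f : Euc N → ℝ, Continuous f → Bornology.IsBounded (Set.range f) →
      ∫ x, f x ∂ω = perron Ω f p

/-- Wiener regularity: every boundary point is regular for the Dirichlet problem. -/
def WienerRegular {N : ℕ} (Ω : Set (Euc N)) : Prop :=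
  ∀ ξ ∈ frontier Ω, ∀ f : Euc N → ℝ, Continuous f → Bornology.IsBounded (Set.range f) →
    Tendsto (perron Ω f) (𝓝[Ω] ξ) (𝓝 (f ξ))

/-- `u` is the Green function of `Ω` with pole `p`, extended by `0` outside `Ω`. -/
def IsGreenFunction {N : ℕ} (Ω : Set (Euc N)) (p : Euc N) (u : Euc N → ℝ) : Prop :=
  (∀ x, x ∉ Ω → u x = 0) ∧ (∀ x, 0 ≤ u x) ∧ IsHarmonicOn u (Ω \ {p}) ∧
    ∃ h : Euc N → ℝ, IsHarmonicOn h Ω ∧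
      ∀ x ∈ Ω \ {p}, u x = ‖x - p‖ ^ (2 - (N : ℝ)) - h x

/-- `s`-dimensional Hausdorff content. -/
def hContent {N : ℕ} (s : ℝ) (A : Set (Euc N)) : ℝ≥0∞ :=
  ⨅ (t : ℕ → Set (Euc N)) (_ : A ⊆ ⋃ i, t i), ∑' i, EMetric.diam (t i) ^ s

/-- `F` is `n`-rectifiable: up to an `H^n`-null set it is covered by countably many
Lipschitz images of `ℝ^n`. -/
def IsRectifiableSet (n : ℕ) (F : Set (Euc (n+1))) : Prop :=
  ∃ f : ℕ → EuclideanSpace ℝ (Fin n) → Euc (n+1),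
    (∀ i, ∃ K : ℝ≥0, LipschitzWith K (f i)) ∧
      μH[(n : ℝ)] (F \ ⋃ i, Set.range (f i)) = 0

/-- Mutual absolute continuity of two measures. -/
def MutuallyAC {N : ℕ} (μ ν : Measure (Euc N)) : Prop := μ ≪ ν ∧ ν ≪ μ

/-- The rescaling map `T_{a,r}(x) = (x - a)/r`. -/
def scaleMap {N : ℕ} (a : Euc N) (r : ℝ) : Euc N → Euc N := fun x => r⁻¹ • (x - a)

/-- Weak-* convergence of a sequence of measures against compactly supported
continuous functions. -/
def WeakLim {N : ℕ} (μ : ℕ → Measure (Euc N)) (ν : Measure (Euc N)) : Prop :=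
  ∀ f : Euc N → ℝ, Continuous f → HasCompactSupport f →
    Tendsto (fun j => ∫ x, f x ∂(μ j)) atTop (𝓝 (∫ x, f x ∂ν))

/-- `ν` is a tangent measure of `μ` at `ξ`. -/
def IsTangentMeasure {N : ℕ} (μ : Measure (Euc N)) (ξ : Euc N) (ν : Measure (Euc N)) : Prop :=
  ν ≠ 0 ∧ ∃ c r : ℕ → ℝ, (∀ j, 0 < c j) ∧ (∀ j, 0 < r j) ∧ Tendsto r atTop (𝓝 0) ∧
    WeakLim (fun j => ENNReal.ofReal (c j) • (μ.map (scaleMap ξ (r j)))) ν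

/-- The cone of (positive multiples of) `n`-dimensional Hausdorff measures restricted
to `n`-planes through the origin in `ℝ^{n+1}`. -/
def flatCone (n : ℕ) : Set (Measure (Euc (n+1))) :=
  {μ | ∃ (c : ℝ) (V : Submodule ℝ (Euc (n+1))), 0 < c ∧ Module.finrank ℝ V = n ∧
    μ = ENNReal.ofReal c • (μH[(n : ℝ)].restrict (V : Set (Euc (n+1))))}

/-- The `β_{μ,1}(ξ,r)` coefficient: `inf_L r^{-n} ∫_{B(ξ,r)} dist(x,L)/r dμ(x)` over
affine `n`-planes `L`. -/
def beta1 (n : ℕ) (μ : Measure (Euc (n+1))) (ξ : Euc (n+1)) (r : ℝ) : ℝ≥0∞ :=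
  ⨅ (L : AffineSubspace ℝ (Euc (n+1))) (_ : Module.finrank ℝ L.direction = n),
    (∫⁻ x in closedBall ξ r, ENNReal.ofReal (infDist x (L : Set (Euc (n+1)))) ∂μ) /
      ENNReal.ofReal (r ^ (n + 1))

/-- The quantity `s^{-2} ∫_{B(ξ,s)} |∇u(y)|²/|y-ξ|^{n-1} dy`. -/
def gradTerm (n : ℕ) (u : Euc (n+1) → ℝ) (ξ : Euc (n+1)) (s : ℝ) : ℝ≥0∞ :=
  (∫⁻ y in ball ξ s, ((‖fderiv ℝ u y‖₊ : ℝ≥0∞) ^ 2) / ENNReal.ofReal (‖y - ξ‖ ^ (n - 1))) /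
    ENNReal.ofReal (s ^ 2)

/-- The Alt–Caffarelli–Friedman functional `γ(ξ,s)`. -/
def acfGamma (n : ℕ) (u₁ u₂ : Euc (n+1) → ℝ) (ξ : Euc (n+1)) (s : ℝ) : ℝ≥0∞ :=
  gradTerm n u₁ ξ s * gradTerm n u₂ ξ s

/-- `P_{γ,μ}(B(x,r)) = Σ_{j≥0} 2^{-jγ} Θ_μ(B(x,2^j r))`. -/
def Pgamma (n : ℕ) (γ : ℝ) (μ : Measure (Euc (n+1))) (x : Euc (n+1)) (r : ℝ) : ℝ≥0∞ :=
  ∑' j : ℕ, ENNReal.ofReal ((2 : ℝ) ^ (-(j : ℝ) * γ)) *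
    (μ (closedBall x ((2 : ℝ) ^ j * r)) / ENNReal.ofReal (((2 : ℝ) ^ j * r) ^ n))

/-- `B(x,r)` is an `a`-`P_{γ,μ}`-doubling ball. -/
def PDoubling (n : ℕ) (γ a : ℝ) (μ : Measure (Euc (n+1))) (x : Euc (n+1)) (r : ℝ) : Prop :=
  Pgamma n γ μ x r ≤ ENNReal.ofReal a * (μ (closedBall x r) / ENNReal.ofReal (r ^ n))

/-- The `n`-dimensional Riesz kernel `K(x) = x/|x|^{n+1}` in `ℝ^{n+1}`. -/
def rieszKernel (n : ℕ) (x : Euc (n+1)) : Euc (n+1) := (‖x‖ ^ (n + 1))⁻¹ • x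

/-- The truncated Riesz transform `R_r μ(x) = ∫_{|x-y|>r} K(x-y) dμ(y)`. -/
def truncRiesz (n : ℕ) (μ : Measure (Euc (n+1))) (r : ℝ) (x : Euc (n+1)) : Euc (n+1) :=
  ∫ y in {y | r < dist x y}, rieszKernel n (x - y) ∂μ

/-- The set `E_m` of points of `E` with doubling harmonic measures, two-sided
interior volume, and small `β₁` at all scales below `1/m`. -/
def goodSet (n : ℕ) (Ω₁ Ω₂ : Set (Euc (n+1))) (ω₁ ω₂ : Measure (Euc (n+1)))
    (E : Set (Euc (n+1))) (ε : ℝ) (m : ℕ) : Set (Euc (n+1)) :=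
  {ξ ∈ E | ∀ r : ℝ, 0 < r → r < 1 / (m : ℝ) →
    ω₁ (closedBall ξ (2 * r)) ≤ (m : ℝ≥0∞) * ω₁ (closedBall ξ r) ∧
    ω₂ (closedBall ξ (2 * r)) ≤ (m : ℝ≥0∞) * ω₂ (closedBall ξ r) ∧
    ENNReal.ofReal (r ^ (n + 1) / (m : ℝ)) ≤ volume (closedBall ξ r ∩ Ω₁) ∧
    ENNReal.ofReal (r ^ (n + 1) / (m : ℝ)) ≤ volume (closedBall ξ r ∩ Ω₂) ∧
    beta1 n ω₁ ξ r < ENNReal.ofReal ε * ω₁ (closedBall ξ r) / ENNReal.ofReal (r ^ n)}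

/-- `ξ` is a point of `Γ`: positive finite density `h(ξ) = dω₂/dω₁(ξ)` exists,
`ξ` is an `ω₁`-Lebesgue point of `h`, and `E` has density one at `ξ` for both measures. -/
def GammaPt (n : ℕ) (ω₁ ω₂ : Measure (Euc (n+1))) (E : Set (Euc (n+1)))
    (h : Euc (n+1) → ℝ) (ξ : Euc (n+1)) : Prop :=
  0 < h ξ ∧
  Tendsto (fun r : ℝ => ω₂ (closedBall ξ r) / ω₁ (closedBall ξ r)) (𝓝[>] 0)
    (𝓝 (ENNReal.ofReal (h ξ))) ∧
  Tendsto (fun r : ℝ =>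
      (∫⁻ x in closedBall ξ r, ENNReal.ofReal |h x - h ξ| ∂ω₁) / ω₁ (closedBall ξ r))
    (𝓝[>] 0) (𝓝 0) ∧
  Tendsto (fun r : ℝ => ω₁ (E ∩ closedBall ξ r) / ω₁ (closedBall ξ r)) (𝓝[>] 0) (𝓝 1) ∧
  Tendsto (fun r : ℝ => ω₂ (E ∩ closedBall ξ r) / ω₂ (closedBall ξ r)) (𝓝[>] 0) (𝓝 1)

/-- `F_{B(0,r)}(μ,ν)`: sup of `∫ f dμ - ∫ f dν` over `1`-Lipschitz functions
supported in the closed ball of radius `r`. -/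
def Fdist {N : ℕ} (r : ℝ) (μ ν : Measure (Euc N)) : ℝ :=
  sSup {t | ∃ f : Euc N → ℝ, LipschitzWith 1 f ∧ (∀ x ∉ closedBall (0 : Euc N) r, f x = 0) ∧
    t = ∫ x, f x ∂μ - ∫ x, f x ∂ν}

/-- `F_r(μ) = ∫ (r - |z|)₊ dμ(z)`. -/
def Fr {N : ℕ} (r : ℝ) (μ : Measure (Euc N)) : ℝ := ∫ x, max (r - ‖x‖) 0 ∂μ

/-- The distance `d_r(μ, 𝓜)` from `μ` to a cone of measures `𝓜`. -/
def dCone {N : ℕ} (r : ℝ) (μ : Measure (Euc N)) (M : Set (Measure (Euc N))) : ℝ :=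
  sInf {t | ∃ ν ∈ M, Fr r ν = 1 ∧ t = Fdist r ((ENNReal.ofReal (Fr r μ))⁻¹ • μ) ν}

/-- `δ₀` is a constant for which Bourgain's estimate holds in `ℝ^{n+1}`. -/
def BourgainEstimateHolds (n : ℕ) (δ₀ : ℝ) : Prop :=
  0 < δ₀ ∧ ∀ s : ℝ, (n : ℝ) - 1 < s → s ≤ (n : ℝ) + 1 →
    ∃ c : ℝ, 0 < c ∧
      ∀ Ω : Set (Euc (n+1)), DomainSet Ω →
      ∀ ω : Euc (n+1) → Measure (Euc (n+1)), (∀ x ∈ Ω, IsHarmonicMeasure Ω x (ω x)) →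
      ∀ ξ ∈ frontier Ω, ∀ r : ℝ, 0 < r →
      ∀ x ∈ closedBall ξ (δ₀ * r) ∩ Ω,
        ENNReal.ofReal c * hContent s (closedBall ξ (δ₀ * r) \ Ω) /
            ENNReal.ofReal ((δ₀ * r) ^ s)
          ≤ (ω x) (closedBall ξ r)

lemma auxD {α : Type*} [MeasurableSpace α] (ν₁ ν₂ : Measure α)
    [IsFiniteMeasure ν₁] [IsFiniteMeasure ν₂]
    (h' ρ k : α → ℝ≥0∞) (hh' : Measurable h')
    (hWD : ν₁.withDensity h' = ν₂) (hρ : ν₁.withDensity ρ = ν₂)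
    (cc : ℝ≥0∞) (hcc : cc ≠ ∞) (hpt : ∀ x, ρ x ≤ cc + k x)
    {B : Set α} (hB : MeasurableSet B) :
    ∫⁻ x in B, ((h' x - cc) + (cc - h' x)) ∂ν₁
      ≤ 2 * ∫⁻ x in B, k x ∂ν₁ + (cc * ν₁ B - ν₂ B) := by
  have up : ∀ A : Set α, MeasurableSet A →
      ν₂ A ≤ cc * ν₁ A + ∫⁻ x in A, k x ∂ν₁ := by
    intro A hA
    rw [← hρ, withDensity_apply _ hA]
    calc ∫⁻ x in A, ρ x ∂ν₁ ≤ ∫⁻ x in A, (cc + k x) ∂ν₁ :=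
          lintegral_mono fun x => hpt x
      _ = cc * ν₁ A + ∫⁻ x in A, k x ∂ν₁ := by
          rw [lintegral_add_left measurable_const, setLIntegral_const]
  set P := B ∩ {x | cc ≤ h' x} with hPdef
  set N := B ∩ {x | h' x < cc} with hNdef
  have hPm : MeasurableSet P := hB.inter (measurableSet_le measurable_const hh')
  have hNm : MeasurableSet N := hB.inter (measurableSet_lt hh' measurable_const)
  have hPN : B = P ∪ N := by
    ext x
    simp only [hPdef, hNdef, Set.mem_inter_iff, Set.mem_union, Set.mem_setOf_eq]
    constructor
    · intro hx; rcases le_or_gt cc (h' x) with hle | hlt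
      · exact Or.inl ⟨hx, hle⟩
      · exact Or.inr ⟨hx, hlt⟩
    · rintro (⟨hx, _⟩ | ⟨hx, _⟩) <;> exact hx
  have hdisjPN : Disjoint P N := by
    rw [Set.disjoint_left]
    rintro x ⟨_, hle⟩ ⟨_, hlt⟩
    have h1 : cc ≤ h' x := hle
    have h2 : h' x < cc := hlt
    exact absurd h1 (not_le.2 h2)
  have hPB : P ⊆ B := Set.inter_subset_left
  have hNB : N ⊆ B := Set.inter_subset_left
  have hintP : ∫⁻ x in P, k x ∂ν₁ ≤ ∫⁻ x in B, k x ∂ν₁ :=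
    lintegral_mono' (Measure.restrict_mono hPB le_rfl) le_rfl
  have hhP : ∫⁻ x in P, h' x ∂ν₁ = ν₂ P := by
    rw [← withDensity_apply h' hPm, hWD]
  have hhN : ∫⁻ x in N, h' x ∂ν₁ = ν₂ N := by
    rw [← withDensity_apply h' hNm, hWD]
  have hsplit : ∫⁻ x in B, ((h' x - cc) + (cc - h' x)) ∂ν₁
      = ∫⁻ x in P, ((h' x - cc) + (cc - h' x)) ∂ν₁
        + ∫⁻ x in N, ((h' x - cc) + (cc - h' x)) ∂ν₁ := by
    rw [hPN, lintegral_union hNm hdisjPN]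
  have hPpart : ∫⁻ x in P, ((h' x - cc) + (cc - h' x)) ∂ν₁
      = ∫⁻ x in P, (h' x - cc) ∂ν₁ := by
    refine setLIntegral_congr_fun hPm (fun x hx => ?_)
    rw [show cc - h' x = 0 from tsub_eq_zero_of_le hx.2, add_zero]
  have hNpart : ∫⁻ x in N, ((h' x - cc) + (cc - h' x)) ∂ν₁
      = ∫⁻ x in N, (cc - h' x) ∂ν₁ := by
    refine setLIntegral_congr_fun hNm (fun x hx => ?_)
    rw [show h' x - cc = 0 from tsub_eq_zero_of_le (le_of_lt hx.2), zero_add]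
  have hPval : ∫⁻ x in P, (h' x - cc) ∂ν₁ = ν₂ P - cc * ν₁ P := by
    rw [lintegral_sub measurable_const
      (by rw [setLIntegral_const]; exact ENNReal.mul_ne_top hcc (measure_ne_top _ _))
      ((ae_restrict_iff' hPm).2 (ae_of_all _ fun x hx => (hx.2 : cc ≤ h' x))),
      setLIntegral_const, hhP]
  have hNval : ∫⁻ x in N, (cc - h' x) ∂ν₁ = cc * ν₁ N - ν₂ N := by
    rw [lintegral_sub hh' (by rw [hhN]; exact measure_ne_top _ _)
      ((ae_restrict_iff' hNm).2 (ae_of_all _ fun x hx => (hx.2 : h' x < cc).le)),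
      setLIntegral_const, hhN]
  have hPbound : ν₂ P - cc * ν₁ P ≤ ∫⁻ x in B, k x ∂ν₁ := by
    rw [tsub_le_iff_right]
    calc ν₂ P ≤ cc * ν₁ P + ∫⁻ x in P, k x ∂ν₁ := up P hPm
      _ ≤ cc * ν₁ P + ∫⁻ x in B, k x ∂ν₁ := by gcongr
      _ = ∫⁻ x in B, k x ∂ν₁ + cc * ν₁ P := add_comm _ _
  have hb1 : ν₁ B = ν₁ P + ν₁ N := by rw [hPN, measure_union hdisjPN hNm]
  have hb2 : ν₂ B = ν₂ P + ν₂ N := by rw [hPN, measure_union hdisjPN hNm]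
  have key : cc * ν₁ N + ν₂ B ≤ cc * ν₁ B + ν₂ N + ∫⁻ x in B, k x ∂ν₁ := by
    calc cc * ν₁ N + ν₂ B = cc * ν₁ N + (ν₂ P + ν₂ N) := by rw [hb2]
      _ ≤ cc * ν₁ N + ((cc * ν₁ P + ∫⁻ x in B, k x ∂ν₁) + ν₂ N) :=
          add_le_add le_rfl (add_le_add ((up P hPm).trans (add_le_add le_rfl hintP)) le_rfl)
      _ = cc * (ν₁ P + ν₁ N) + ν₂ N + ∫⁻ x in B, k x ∂ν₁ := by ring
      _ = cc * ν₁ B + ν₂ N + ∫⁻ x in B, k x ∂ν₁ := by rw [← hb1]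
  have hNbound : cc * ν₁ N - ν₂ N ≤ (cc * ν₁ B - ν₂ B) + ∫⁻ x in B, k x ∂ν₁ := by
    rw [tsub_le_iff_right]
    have h1 : cc * ν₁ N ≤ (cc * ν₁ B + ν₂ N + ∫⁻ x in B, k x ∂ν₁) - ν₂ B :=
      ENNReal.le_sub_of_add_le_right (measure_ne_top _ _) key
    refine h1.trans ?_
    rw [tsub_le_iff_right]
    calc cc * ν₁ B + ν₂ N + ∫⁻ x in B, k x ∂ν₁
        ≤ ((cc * ν₁ B - ν₂ B) + ν₂ B) + ν₂ N + ∫⁻ x in B, k x ∂ν₁ :=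
          add_le_add (add_le_add le_tsub_add le_rfl) le_rfl
      _ = (cc * ν₁ B - ν₂ B) + ∫⁻ x in B, k x ∂ν₁ + ν₂ N + ν₂ B := by ring
  calc ∫⁻ x in B, ((h' x - cc) + (cc - h' x)) ∂ν₁
      = (ν₂ P - cc * ν₁ P) + (cc * ν₁ N - ν₂ N) := by
        rw [hsplit, hPpart, hNpart, hPval, hNval]
    _ ≤ (∫⁻ x in B, k x ∂ν₁) + ((cc * ν₁ B - ν₂ B) + ∫⁻ x in B, k x ∂ν₁) :=
        add_le_add hPbound hNbound
    _ = 2 * ∫⁻ x in B, k x ∂ν₁ + (cc * ν₁ B - ν₂ B) := by ring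

lemma auxEst {α : Type*} [MeasurableSpace α] (μ₁ μ₂ : Measure α)
    [IsFiniteMeasure μ₁] [IsFiniteMeasure μ₂]
    {E B : Set α} (hE : MeasurableSet E) (hB : MeasurableSet B)
    (h' : α → ℝ≥0∞) (hh' : Measurable h')
    (hWD : (μ₁.restrict E).withDensity h' = μ₂.restrict E)
    (hfin : ∀ᵐ x ∂(μ₁.restrict E), h' x < ∞)
    (c0 M : ℝ) (hc0 : 0 ≤ c0) (hM : 0 ≤ M)
    (g : α → ℝ) (hgm : Measurable g) (hgb : ∀ x, |g x| ≤ M) (hg0 : ∀ x ∉ B, g x = 0)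
    (hD : ∫⁻ x in B, ((h' x - ENNReal.ofReal c0) + (ENNReal.ofReal c0 - h' x))
        ∂(μ₁.restrict E) ≠ ∞) :
    |∫ x, g x ∂μ₂ - c0 * ∫ x, g x ∂μ₁|
      ≤ M * ((μ₂ (B \ E)).toReal + c0 * (μ₁ (B \ E)).toReal
          + (∫⁻ x in B, ((h' x - ENNReal.ofReal c0) + (ENNReal.ofReal c0 - h' x))
              ∂(μ₁.restrict E)).toReal) := by
  set ν₁ := μ₁.restrict E with hν₁
  set ν₂ := μ₂.restrict E with hν₂
  set cc := ENNReal.ofReal c0 with hccdef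
  have hint : ∀ (μ : Measure α) [IsFiniteMeasure μ], Integrable g μ := by
    intro μ _
    exact (integrable_const M).mono' hgm.aestronglyMeasurable
      (ae_of_all _ fun x => by simpa [Real.norm_eq_abs] using hgb x)
  -- decomposition of the integrals
  have hsplit : ∀ (μ : Measure α) [IsFiniteMeasure μ],
      ∫ x, g x ∂μ = ∫ x, g x ∂(μ.restrict E) + ∫ x, g x ∂(μ.restrict Eᶜ) := by
    intro μ _
    conv_lhs => rw [← Measure.restrict_add_restrict_compl (μ := μ) hE]
    exact integral_add_measure (hint _) (hint _)
  -- the off-E pieces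
  have hoff : ∀ (μ : Measure α) [IsFiniteMeasure μ],
      |∫ x, g x ∂(μ.restrict Eᶜ)| ≤ M * (μ (B \ E)).toReal := by
    intro μ _
    have h1 : ∫ x, g x ∂(μ.restrict Eᶜ) = ∫ x in B, g x ∂(μ.restrict Eᶜ) := by
      rw [← integral_indicator hB,
        Set.indicator_eq_self.2 (Function.support_subset_iff'.2 hg0)]
    rw [h1, ← Real.norm_eq_abs]
    have h2 := norm_setIntegral_le_of_norm_le_const (μ := μ.restrict Eᶜ) (s := B) (C := M) (f := g)
      (measure_lt_top _ _) (fun x _ => by simpa [Real.norm_eq_abs] using hgb x)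
    refine h2.trans ?_
    rw [Measure.real, Measure.restrict_apply hB, ← Set.diff_eq]
  -- the density identity on E
  have hfin' : ∀ᵐ x ∂ν₁, h' x < ∞ := hfin
  have hwd2 : ν₁.withDensity (fun x => ((h' x).toNNReal : ℝ≥0∞)) = ν₂ := by
    rw [← hWD]
    exact withDensity_congr_ae (hfin'.mono fun x hx => ENNReal.coe_toNNReal hx.ne)
  have hsm : Integrable (fun x => (h' x).toNNReal • g x) ν₁ :=
    (integrable_withDensity_iff_integrable_smul₀ hh'.ennreal_toNNReal.aemeasurable).1
      (by rw [hwd2]; exact hint _)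
  have hsm' : Integrable (fun x => (h' x).toReal * g x) ν₁ := by
    simpa [NNReal.smul_def, ENNReal.toReal] using hsm
  have hid : ∫ x, g x ∂ν₂ = ∫ x, (h' x).toReal * g x ∂ν₁ := by
    rw [← hwd2, integral_withDensity_eq_integral_smul₀ hh'.ennreal_toNNReal.aemeasurable g]
    simp [NNReal.smul_def, ENNReal.toReal]
  -- main term
  have hmain : |∫ x, g x ∂ν₂ - c0 * ∫ x, g x ∂ν₁|
      ≤ M * (∫⁻ x in B, ((h' x - cc) + (cc - h' x)) ∂ν₁).toReal := by
    have e1 : ∫ x, g x ∂ν₂ - c0 * ∫ x, g x ∂ν₁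
        = ∫ x, ((h' x).toReal - c0) * g x ∂ν₁ := by
      rw [hid, ← integral_const_mul, ← integral_sub hsm' ((hint ν₁).const_mul c0)]
      congr 1
      funext x
      ring
    rw [e1, ← Real.norm_eq_abs]
    refine (norm_integral_le_integral_norm _).trans ?_
    -- restrict to B
    have e2 : ∫ x, ‖((h' x).toReal - c0) * g x‖ ∂ν₁
        = ∫ x in B, ‖((h' x).toReal - c0) * g x‖ ∂ν₁ := by
      rw [← integral_indicator hB]
      congr 1
      refine (Set.indicator_eq_self.2 ?_).symm
      intro x hx
      simp only [Function.mem_support, ne_eq] at hx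
      by_contra hxB
      exact hx (by rw [hg0 x hxB, mul_zero, norm_zero])
    rw [e2]
    -- pointwise a.e. bound in ℝ≥0∞
    have hptwise : ∀ᵐ x ∂(ν₁.restrict B),
        ENNReal.ofReal ‖((h' x).toReal - c0) * g x‖
          ≤ ENNReal.ofReal M * ((h' x - cc) + (cc - h' x)) := by
      refine (ae_restrict_of_ae (hfin'.mono fun x hx => ?_))
      have hxne : h' x ≠ ∞ := hx.ne
      have hb1 : ‖((h' x).toReal - c0) * g x‖ ≤ M * |(h' x).toReal - c0| := by
        rw [norm_mul, Real.norm_eq_abs, Real.norm_eq_abs, mul_comm]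
        exact mul_le_mul_of_nonneg_right (hgb x) (abs_nonneg _)
      refine (ENNReal.ofReal_le_ofReal hb1).trans ?_
      rw [ENNReal.ofReal_mul hM]
      refine mul_le_mul_of_nonneg_left ?_ zero_le
      rcases le_or_gt c0 ((h' x).toReal) with hcase | hcase
      · rw [abs_of_nonneg (by linarith)]
        rw [ENNReal.ofReal_sub _ hc0, ENNReal.ofReal_toReal hxne]
        exact le_self_add
      · rw [abs_of_neg (by linarith), neg_sub]
        rw [ENNReal.ofReal_sub _ ENNReal.toReal_nonneg, ENNReal.ofReal_toReal hxne]
        exact le_add_self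
    have e3 : ∫ x in B, ‖((h' x).toReal - c0) * g x‖ ∂ν₁
        = (∫⁻ x in B, ENNReal.ofReal ‖((h' x).toReal - c0) * g x‖ ∂ν₁).toReal := by
      refine integral_eq_lintegral_of_nonneg_ae (ae_of_all _ fun x => norm_nonneg _) ?_
      exact ((hh'.ennreal_toReal.sub measurable_const).mul hgm).norm.aestronglyMeasurable
    rw [e3]
    have e4 : ∫⁻ x in B, ENNReal.ofReal ‖((h' x).toReal - c0) * g x‖ ∂ν₁
        ≤ ENNReal.ofReal M * ∫⁻ x in B, ((h' x - cc) + (cc - h' x)) ∂ν₁ := by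
      refine (lintegral_mono_ae hptwise).trans ?_
      rw [lintegral_const_mul _ (show Measurable fun x => (h' x - cc) + (cc - h' x) from ((hh'.sub measurable_const).add
        (measurable_const.sub hh')))]
    have hfin2 : ENNReal.ofReal M * ∫⁻ x in B, ((h' x - cc) + (cc - h' x)) ∂ν₁ ≠ ∞ :=
      ENNReal.mul_ne_top ENNReal.ofReal_ne_top hD
    refine (ENNReal.toReal_mono hfin2 e4).trans ?_
    rw [ENNReal.toReal_mul, ENNReal.toReal_ofReal hM]
  -- assemble
  have htotal : ∫ x, g x ∂μ₂ - c0 * ∫ x, g x ∂μ₁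
      = (∫ x, g x ∂ν₂ - c0 * ∫ x, g x ∂ν₁)
        + ∫ x, g x ∂(μ₂.restrict Eᶜ) - c0 * ∫ x, g x ∂(μ₁.restrict Eᶜ) := by
    rw [hsplit μ₁, hsplit μ₂]
    ring
  rw [htotal]
  have t1 := hmain
  have t2 := hoff μ₂
  have t3 := hoff μ₁
  calc |(∫ x, g x ∂ν₂ - c0 * ∫ x, g x ∂ν₁)
        + ∫ x, g x ∂(μ₂.restrict Eᶜ) - c0 * ∫ x, g x ∂(μ₁.restrict Eᶜ)|
      ≤ |∫ x, g x ∂ν₂ - c0 * ∫ x, g x ∂ν₁| + |∫ x, g x ∂(μ₂.restrict Eᶜ)|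
        + c0 * |∫ x, g x ∂(μ₁.restrict Eᶜ)| := by
        have := abs_mul c0 (∫ x, g x ∂(μ₁.restrict Eᶜ))
        have h4 : |c0| = c0 := abs_of_nonneg hc0
        calc |(∫ x, g x ∂ν₂ - c0 * ∫ x, g x ∂ν₁)
              + ∫ x, g x ∂(μ₂.restrict Eᶜ) - c0 * ∫ x, g x ∂(μ₁.restrict Eᶜ)|
            ≤ |(∫ x, g x ∂ν₂ - c0 * ∫ x, g x ∂ν₁) + ∫ x, g x ∂(μ₂.restrict Eᶜ)|
              + |c0 * ∫ x, g x ∂(μ₁.restrict Eᶜ)| := abs_sub _ _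
          _ ≤ |∫ x, g x ∂ν₂ - c0 * ∫ x, g x ∂ν₁| + |∫ x, g x ∂(μ₂.restrict Eᶜ)|
              + |c0 * ∫ x, g x ∂(μ₁.restrict Eᶜ)| := by
              gcongr
              exact abs_add_le _ _
          _ = _ := by rw [abs_mul, h4]
    _ ≤ M * (∫⁻ x in B, ((h' x - cc) + (cc - h' x)) ∂ν₁).toReal
        + M * (μ₂ (B \ E)).toReal + c0 * (M * (μ₁ (B \ E)).toReal) := by
        gcongr
    _ = M * ((μ₂ (B \ E)).toReal + c0 * (μ₁ (B \ E)).toReal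
          + (∫⁻ x in B, ((h' x - cc) + (cc - h' x)) ∂ν₁).toReal) := by ring


/-- **Lemma 5.2.** Let `Ω₁, Ω₂ ⊆ ℝ^{n+1}` be disjoint domains with harmonic measures
mutually absolutely continuous on `E ⊆ ∂Ω₁ ∩ ∂Ω₂`, and let `ξ ∈ E` be a point where the
density `h(ξ) = dω₂/dω₁(ξ) ∈ (0,∞)` exists, `ξ` is a Lebesgue point of `h` and `E` has
density one for both measures. If `c_j ≥ 0`, `r_j → 0` and
`c_j T_{ξ,r_j}[ω₁] → ω₁^∞` weakly, then `c_j T_{ξ,r_j}[ω₂] → h(ξ) ω₁^∞` weakly. -/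
theorem statement10 (n : ℕ) (hn : 2 ≤ n)
    (Ω₁ Ω₂ : Set (Euc (n+1))) (hΩ₁ : DomainSet Ω₁) (hΩ₂ : DomainSet Ω₂)
    (hdisj : Disjoint Ω₁ Ω₂)
    (p₁ p₂ : Euc (n+1)) (hp₁ : p₁ ∈ Ω₁) (hp₂ : p₂ ∈ Ω₂)
    (ω₁ ω₂ : Measure (Euc (n+1)))
    (hω₁ : IsHarmonicMeasure Ω₁ p₁ ω₁) (hω₂ : IsHarmonicMeasure Ω₂ p₂ ω₂)
    (E : Set (Euc (n+1))) (hE : MeasurableSet E)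
    (hEsub : E ⊆ frontier Ω₁ ∩ frontier Ω₂)
    (hac : MutuallyAC (ω₁.restrict E) (ω₂.restrict E))
    (h : Euc (n+1) → ℝ)
    (hdens : ω₂.restrict E = (ω₁.restrict E).withDensity (fun x => ENNReal.ofReal (h x)))
    (ξ : Euc (n+1)) (hξE : ξ ∈ E) (hξ : GammaPt n ω₁ ω₂ E h ξ)
    (c r : ℕ → ℝ) (hc : ∀ j, 0 ≤ c j) (hr : ∀ j, 0 < r j)
    (hr0 : Tendsto r atTop (𝓝 0))
    (ωinf : Measure (Euc (n+1)))
    (hconv : WeakLim (fun j => ENNReal.ofReal (c j) • (ω₁.map (scaleMap ξ (r j)))) ωinf) :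
    WeakLim (fun j => ENNReal.ofReal (c j) • (ω₂.map (scaleMap ξ (r j))))
      (ENNReal.ofReal (h ξ) • ωinf) := by
  haveI inst1 : IsFiniteMeasure ω₁ := hω₁.1
  haveI inst2 : IsFiniteMeasure ω₂ := hω₂.1
  obtain ⟨hpos, hrati, hleb, hd1, hd2⟩ := hξ
  intro f hf hfc
  -- bound on f and support radius
  obtain ⟨M, hM₀⟩ := hfc.exists_bound_of_continuous hf
  have hM : 0 ≤ M := le_trans (norm_nonneg _) (hM₀ 0)
  obtain ⟨R₀, hR₀⟩ := hfc.isBounded.subset_closedBall 0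
  set R : ℝ := max R₀ 1 with hRdef
  have hR1 : (1:ℝ) ≤ R := le_max_right _ _
  have hRpos : (0:ℝ) < R := lt_of_lt_of_le one_pos hR1
  have hsupp : tsupport f ⊆ closedBall 0 R :=
    hR₀.trans (closedBall_subset_closedBall (le_max_left _ _))
  -- the rescaling maps
  have hTcont : ∀ j, Continuous (scaleMap ξ (r j)) := by
    intro j
    have : Continuous fun x : Euc (n+1) => (r j)⁻¹ • (x - ξ) :=
      by fun_prop
    exact this
  have hTmeas : ∀ j, Measurable (scaleMap ξ (r j)) := fun j => (hTcont j).measurable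
  have hmem : ∀ j x, scaleMap ξ (r j) x ∈ closedBall (0 : Euc (n+1)) R
      ↔ x ∈ closedBall ξ (r j * R) := by
    intro j x
    have hnorm : ‖scaleMap ξ (r j) x‖ = (r j)⁻¹ * ‖x - ξ‖ := by
      rw [show scaleMap ξ (r j) x = (r j)⁻¹ • (x - ξ) from rfl, norm_smul, norm_inv,
        Real.norm_eq_abs, abs_of_pos (hr j)]
    rw [mem_closedBall_zero_iff, hnorm, mem_closedBall, dist_eq_norm,
      inv_mul_le_iff₀ (hr j)]
  have hg0 : ∀ j x, x ∉ closedBall ξ (r j * R) → f (scaleMap ξ (r j) x) = 0 := by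
    intro j x hx
    refine image_eq_zero_of_notMem_tsupport fun hmem' => hx ?_
    exact (hmem j x).1 (hsupp hmem')
  -- integral transformation
  have hint : ∀ (j : ℕ) (ω : Measure (Euc (n+1))) (g : Euc (n+1) → ℝ), Continuous g →
      ∫ x, g x ∂(ENNReal.ofReal (c j) • ω.map (scaleMap ξ (r j)))
        = c j * ∫ x, g (scaleMap ξ (r j) x) ∂ω := by
    intro j ω g hg
    rw [integral_smul_measure, integral_map (hTmeas j).aemeasurable
      hg.aestronglyMeasurable, ENNReal.toReal_ofReal (hc j), smul_eq_mul]
  have A : Tendsto (fun j => c j * ∫ x, f (scaleMap ξ (r j) x) ∂ω₁) atTop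
      (𝓝 (∫ x, f x ∂ωinf)) :=
    Tendsto.congr (fun j => hint j ω₁ f hf) (hconv f hf hfc)
  -- reduce the goal
  have hRHS : ∫ x, f x ∂(ENNReal.ofReal (h ξ) • ωinf) = h ξ * ∫ x, f x ∂ωinf := by
    rw [integral_smul_measure, ENNReal.toReal_ofReal hpos.le, smul_eq_mul]
  rw [hRHS]
  suffices Htgt : Tendsto (fun j => c j * ∫ x, f (scaleMap ξ (r j) x) ∂ω₂) atTop
      (𝓝 (h ξ * ∫ x, f x ∂ωinf)) by
    exact Tendsto.congr (fun j => (hint j ω₂ f hf).symm) Htgt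
  -- Radon–Nikodym derivative on E
  set rn : Euc (n+1) → ℝ≥0∞ := (ω₂.restrict E).rnDeriv (ω₁.restrict E) with hrn
  have hrnm : Measurable rn := Measure.measurable_rnDeriv _ _
  haveI : (ω₂.restrict E).HaveLebesgueDecomposition (ω₁.restrict E) :=
    Measure.haveLebesgueDecomposition_of_sigmaFinite _ _
  have hWD : (ω₁.restrict E).withDensity rn = ω₂.restrict E :=
    Measure.withDensity_rnDeriv_eq _ _ hac.2
  have hfin : ∀ᵐ x ∂(ω₁.restrict E), rn x < ∞ := Measure.rnDeriv_lt_top _ _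
  have hccne : (ENNReal.ofReal (h ξ)) ≠ 0 := (ENNReal.ofReal_pos.2 hpos).ne'
  have hcct : (ENNReal.ofReal (h ξ)) ≠ ∞ := ENNReal.ofReal_ne_top
  have hpt : ∀ x, ENNReal.ofReal (h x)
      ≤ ENNReal.ofReal (h ξ) + ENNReal.ofReal |h x - h ξ| := by
    intro x
    calc ENNReal.ofReal (h x) ≤ ENNReal.ofReal (h ξ + |h x - h ξ|) :=
          ENNReal.ofReal_le_ofReal (by
            have := le_abs_self (h x - h ξ); linarith)
      _ = ENNReal.ofReal (h ξ) + ENNReal.ofReal |h x - h ξ| :=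
          ENNReal.ofReal_add hpos.le (abs_nonneg _)
  -- eventual smallness of the error terms
  have evB : ∀ ε : ℝ, 0 < ε → ε ≤ 1 → ∀ᶠ s : ℝ in 𝓝[>] (0:ℝ),
      ω₂ (closedBall ξ s \ E) + ENNReal.ofReal (h ξ) * ω₁ (closedBall ξ s \ E)
        + ∫⁻ x in closedBall ξ s,
            ((rn x - ENNReal.ofReal (h ξ)) + (ENNReal.ofReal (h ξ) - rn x)) ∂(ω₁.restrict E)
        ≤ ENNReal.ofReal (ε * (3 * h ξ + 5)) * ω₁ (closedBall ξ s) := by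
    intro ε hε hε1
    have he0 : (ENNReal.ofReal ε) ≠ 0 := (ENNReal.ofReal_pos.2 hε).ne'
    have he1 : ENNReal.ofReal ε ≤ 1 := ENNReal.ofReal_le_one.2 hε1
    have ev1 := hd1 (Ioi_mem_nhds (ENNReal.sub_lt_self ENNReal.one_ne_top one_ne_zero he0))
    have ev2 := hd2 (Ioi_mem_nhds (ENNReal.sub_lt_self ENNReal.one_ne_top one_ne_zero he0))
    have ev3 := hrati (Iio_mem_nhds (ENNReal.lt_add_right hcct he0))
    have ev4 := hrati (Ioi_mem_nhds (ENNReal.sub_lt_self hcct hccne he0))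
    have ev5 := hleb (Iio_mem_nhds (ENNReal.ofReal_pos.2 hε))
    filter_upwards [ev1, ev2, ev3, ev4, ev5] with s h1 h2 h3 h4 h5
    have hBm : MeasurableSet (closedBall ξ s) := measurableSet_closedBall
    have hbt : ω₁ (closedBall ξ s) ≠ ∞ := measure_ne_top _ _
    have hwt : ω₂ (closedBall ξ s) ≠ ∞ := measure_ne_top _ _
    have hq1 : 1 - ENNReal.ofReal ε < ω₁ (E ∩ closedBall ξ s) / ω₁ (closedBall ξ s) := h1
    have hq2 : 1 - ENNReal.ofReal ε < ω₂ (E ∩ closedBall ξ s) / ω₂ (closedBall ξ s) := h2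
    have hb0 : ω₁ (closedBall ξ s) ≠ 0 := by
      intro h0
      have hz : ω₁ (E ∩ closedBall ξ s) = 0 :=
        le_antisymm ((measure_mono Set.inter_subset_right).trans h0.le) zero_le
      rw [hz, ENNReal.zero_div] at hq1
      exact absurd hq1 (not_lt.2 zero_le)
    have hw0 : ω₂ (closedBall ξ s) ≠ 0 := by
      intro h0
      have hz : ω₂ (E ∩ closedBall ξ s) = 0 :=
        le_antisymm ((measure_mono Set.inter_subset_right).trans h0.le) zero_le
      rw [hz, ENNReal.zero_div] at hq2
      exact absurd hq2 (not_lt.2 zero_le)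
    have hn1 : (1 - ENNReal.ofReal ε) * ω₁ (closedBall ξ s) ≤ ω₁ (E ∩ closedBall ξ s) := by
      calc (1 - ENNReal.ofReal ε) * ω₁ (closedBall ξ s)
          ≤ (ω₁ (E ∩ closedBall ξ s) / ω₁ (closedBall ξ s)) * ω₁ (closedBall ξ s) :=
            mul_le_mul_left hq1.le _
        _ = ω₁ (E ∩ closedBall ξ s) := ENNReal.div_mul_cancel hb0 hbt
    have hn2 : (1 - ENNReal.ofReal ε) * ω₂ (closedBall ξ s) ≤ ω₂ (E ∩ closedBall ξ s) := by
      calc (1 - ENNReal.ofReal ε) * ω₂ (closedBall ξ s)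
          ≤ (ω₂ (E ∩ closedBall ξ s) / ω₂ (closedBall ξ s)) * ω₂ (closedBall ξ s) :=
            mul_le_mul_left hq2.le _
        _ = ω₂ (E ∩ closedBall ξ s) := ENNReal.div_mul_cancel hw0 hwt
    have hup : ω₂ (closedBall ξ s) ≤ (ENNReal.ofReal (h ξ) + ENNReal.ofReal ε)
        * ω₁ (closedBall ξ s) := by
      calc ω₂ (closedBall ξ s)
          = (ω₂ (closedBall ξ s) / ω₁ (closedBall ξ s)) * ω₁ (closedBall ξ s) :=
            (ENNReal.div_mul_cancel hb0 hbt).symm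
        _ ≤ (ENNReal.ofReal (h ξ) + ENNReal.ofReal ε) * ω₁ (closedBall ξ s) :=
            mul_le_mul_left (le_of_lt h3) _
    have hlow : (ENNReal.ofReal (h ξ) - ENNReal.ofReal ε) * ω₁ (closedBall ξ s)
        ≤ ω₂ (closedBall ξ s) := by
      calc (ENNReal.ofReal (h ξ) - ENNReal.ofReal ε) * ω₁ (closedBall ξ s)
          ≤ (ω₂ (closedBall ξ s) / ω₁ (closedBall ξ s)) * ω₁ (closedBall ξ s) :=
            mul_le_mul_left (le_of_lt h4) _
        _ = ω₂ (closedBall ξ s) := ENNReal.div_mul_cancel hb0 hbt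
    have hK : ∫⁻ x in closedBall ξ s, ENNReal.ofReal |h x - h ξ| ∂ω₁
        ≤ ENNReal.ofReal ε * ω₁ (closedBall ξ s) := by
      have h5' : (∫⁻ x in closedBall ξ s, ENNReal.ofReal |h x - h ξ| ∂ω₁)
          / ω₁ (closedBall ξ s) ≤ ENNReal.ofReal ε := le_of_lt h5
      rw [ENNReal.div_le_iff_le_mul (Or.inl hb0) (Or.inl hbt)] at h5'
      exact h5'
    have h1e : ((1:ℝ≥0∞) - ENNReal.ofReal ε) ≠ ∞ :=
      (lt_of_le_of_lt tsub_le_self ENNReal.one_lt_top).ne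
    have hdm1 : ω₁ (closedBall ξ s \ E) ≤ ENNReal.ofReal ε * ω₁ (closedBall ξ s) := by
      have hkey : ω₁ (closedBall ξ s \ E) + (1 - ENNReal.ofReal ε) * ω₁ (closedBall ξ s)
          ≤ ENNReal.ofReal ε * ω₁ (closedBall ξ s)
            + (1 - ENNReal.ofReal ε) * ω₁ (closedBall ξ s) := by
        calc ω₁ (closedBall ξ s \ E) + (1 - ENNReal.ofReal ε) * ω₁ (closedBall ξ s)
            ≤ ω₁ (closedBall ξ s \ E) + ω₁ (closedBall ξ s ∩ E) :=
              add_le_add le_rfl (by rw [Set.inter_comm]; exact hn1)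
          _ = ω₁ (closedBall ξ s) := measure_diff_add_inter _ hE
          _ = (ENNReal.ofReal ε + (1 - ENNReal.ofReal ε)) * ω₁ (closedBall ξ s) := by
              rw [add_tsub_cancel_of_le he1, one_mul]
          _ = ENNReal.ofReal ε * ω₁ (closedBall ξ s)
              + (1 - ENNReal.ofReal ε) * ω₁ (closedBall ξ s) := add_mul _ _ _
      exact (ENNReal.add_le_add_iff_right (ENNReal.mul_ne_top h1e hbt)).1 hkey
    have hdm2 : ω₂ (closedBall ξ s \ E) ≤ ENNReal.ofReal ε * ω₂ (closedBall ξ s) := by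
      have hkey : ω₂ (closedBall ξ s \ E) + (1 - ENNReal.ofReal ε) * ω₂ (closedBall ξ s)
          ≤ ENNReal.ofReal ε * ω₂ (closedBall ξ s)
            + (1 - ENNReal.ofReal ε) * ω₂ (closedBall ξ s) := by
        calc ω₂ (closedBall ξ s \ E) + (1 - ENNReal.ofReal ε) * ω₂ (closedBall ξ s)
            ≤ ω₂ (closedBall ξ s \ E) + ω₂ (closedBall ξ s ∩ E) :=
              add_le_add le_rfl (by rw [Set.inter_comm]; exact hn2)
          _ = ω₂ (closedBall ξ s) := measure_diff_add_inter _ hE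
          _ = (ENNReal.ofReal ε + (1 - ENNReal.ofReal ε)) * ω₂ (closedBall ξ s) := by
              rw [add_tsub_cancel_of_le he1, one_mul]
          _ = ENNReal.ofReal ε * ω₂ (closedBall ξ s)
              + (1 - ENNReal.ofReal ε) * ω₂ (closedBall ξ s) := add_mul _ _ _
      exact (ENNReal.add_le_add_iff_right (ENNReal.mul_ne_top h1e hwt)).1 hkey
    -- term 1
    have ht1 : ω₂ (closedBall ξ s \ E)
        ≤ ENNReal.ofReal ε * (ENNReal.ofReal (h ξ) + 1) * ω₁ (closedBall ξ s) := by
      calc ω₂ (closedBall ξ s \ E) ≤ ENNReal.ofReal ε * ω₂ (closedBall ξ s) := hdm2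
        _ ≤ ENNReal.ofReal ε * ((ENNReal.ofReal (h ξ) + ENNReal.ofReal ε)
            * ω₁ (closedBall ξ s)) := mul_le_mul_right hup _
        _ ≤ ENNReal.ofReal ε * ((ENNReal.ofReal (h ξ) + 1) * ω₁ (closedBall ξ s)) :=
            mul_le_mul_right (mul_le_mul_left (add_le_add le_rfl he1) _) _
        _ = ENNReal.ofReal ε * (ENNReal.ofReal (h ξ) + 1) * ω₁ (closedBall ξ s) :=
            (mul_assoc _ _ _).symm
    -- term 2
    have ht2 : ENNReal.ofReal (h ξ) * ω₁ (closedBall ξ s \ E)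
        ≤ ENNReal.ofReal ε * ENNReal.ofReal (h ξ) * ω₁ (closedBall ξ s) := by
      calc ENNReal.ofReal (h ξ) * ω₁ (closedBall ξ s \ E)
          ≤ ENNReal.ofReal (h ξ) * (ENNReal.ofReal ε * ω₁ (closedBall ξ s)) :=
            mul_le_mul_right hdm1 _
        _ = ENNReal.ofReal ε * ENNReal.ofReal (h ξ) * ω₁ (closedBall ξ s) := by ring
    -- term 3 : the lintegral, via auxD
    have hauxD := auxD (ω₁.restrict E) (ω₂.restrict E) rn
      (fun x => ENNReal.ofReal (h x)) (fun x => ENNReal.ofReal |h x - h ξ|)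
      hrnm hWD hdens.symm (ENNReal.ofReal (h ξ)) hcct hpt hBm
    have hKν : ∫⁻ x in closedBall ξ s, ENNReal.ofReal |h x - h ξ| ∂(ω₁.restrict E)
        ≤ ∫⁻ x in closedBall ξ s, ENNReal.ofReal |h x - h ξ| ∂ω₁ := by
      refine lintegral_mono' ?_ le_rfl
      rw [Measure.restrict_restrict hBm]
      exact Measure.restrict_mono Set.inter_subset_left le_rfl
    have hsub : ENNReal.ofReal (h ξ) * (ω₁.restrict E) (closedBall ξ s)
        - (ω₂.restrict E) (closedBall ξ s)
        ≤ ω₂ (closedBall ξ s \ E) + ENNReal.ofReal ε * ω₁ (closedBall ξ s) := by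
      rw [tsub_le_iff_right]
      have e1 : (ω₁.restrict E) (closedBall ξ s) = ω₁ (closedBall ξ s ∩ E) :=
        Measure.restrict_apply hBm
      have e2 : (ω₂.restrict E) (closedBall ξ s) = ω₂ (closedBall ξ s ∩ E) :=
        Measure.restrict_apply hBm
      calc ENNReal.ofReal (h ξ) * (ω₁.restrict E) (closedBall ξ s)
          ≤ ENNReal.ofReal (h ξ) * ω₁ (closedBall ξ s) := by
            rw [e1]; exact mul_le_mul_right (measure_mono Set.inter_subset_left) _
        _ ≤ ((ENNReal.ofReal (h ξ) - ENNReal.ofReal ε) + ENNReal.ofReal ε)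
            * ω₁ (closedBall ξ s) := mul_le_mul_left le_tsub_add _
        _ = (ENNReal.ofReal (h ξ) - ENNReal.ofReal ε) * ω₁ (closedBall ξ s)
            + ENNReal.ofReal ε * ω₁ (closedBall ξ s) := add_mul _ _ _
        _ ≤ ω₂ (closedBall ξ s) + ENNReal.ofReal ε * ω₁ (closedBall ξ s) :=
            add_le_add hlow le_rfl
        _ = (ω₂ (closedBall ξ s \ E) + ω₂ (closedBall ξ s ∩ E))
            + ENNReal.ofReal ε * ω₁ (closedBall ξ s) := by
            rw [measure_diff_add_inter _ hE]
        _ = (ω₂ (closedBall ξ s \ E) + ENNReal.ofReal ε * ω₁ (closedBall ξ s))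
            + (ω₂.restrict E) (closedBall ξ s) := by rw [e2]; ring
    have ht3 : ∫⁻ x in closedBall ξ s,
        ((rn x - ENNReal.ofReal (h ξ)) + (ENNReal.ofReal (h ξ) - rn x)) ∂(ω₁.restrict E)
        ≤ 2 * (ENNReal.ofReal ε * ω₁ (closedBall ξ s))
          + (ENNReal.ofReal ε * (ENNReal.ofReal (h ξ) + 1) * ω₁ (closedBall ξ s)
            + ENNReal.ofReal ε * ω₁ (closedBall ξ s)) := by
      refine hauxD.trans (add_le_add ?_ (hsub.trans (add_le_add ht1 le_rfl)))
      exact mul_le_mul_right (hKν.trans hK) _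
    -- assemble
    calc ω₂ (closedBall ξ s \ E) + ENNReal.ofReal (h ξ) * ω₁ (closedBall ξ s \ E)
        + ∫⁻ x in closedBall ξ s,
            ((rn x - ENNReal.ofReal (h ξ)) + (ENNReal.ofReal (h ξ) - rn x)) ∂(ω₁.restrict E)
        ≤ ENNReal.ofReal ε * (ENNReal.ofReal (h ξ) + 1) * ω₁ (closedBall ξ s)
          + ENNReal.ofReal ε * ENNReal.ofReal (h ξ) * ω₁ (closedBall ξ s)
          + (2 * (ENNReal.ofReal ε * ω₁ (closedBall ξ s))
            + (ENNReal.ofReal ε * (ENNReal.ofReal (h ξ) + 1) * ω₁ (closedBall ξ s)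
              + ENNReal.ofReal ε * ω₁ (closedBall ξ s))) :=
          add_le_add (add_le_add ht1 ht2) ht3
      _ = ENNReal.ofReal ε * (3 * ENNReal.ofReal (h ξ) + 5) * ω₁ (closedBall ξ s) := by
          ring
      _ = ENNReal.ofReal (ε * (3 * h ξ + 5)) * ω₁ (closedBall ξ s) := by
          rw [ENNReal.ofReal_mul hε.le]
          congr 2
          rw [ENNReal.ofReal_add (by positivity) (by norm_num),
            ENNReal.ofReal_mul (by norm_num : (0:ℝ) ≤ 3)]
          norm_num
  -- scales tend to zero from the right
  have hsR : Tendsto (fun j => r j * R) atTop (𝓝[>] (0:ℝ)) := by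
    rw [tendsto_nhdsWithin_iff]
    constructor
    · simpa using hr0.mul_const R
    · exact Eventually.of_forall fun j => mul_pos (hr j) hRpos
  -- uniform bound on c j * ω₁(B_j) via a test function
  set ψ : Euc (n+1) → ℝ := fun x => max 0 (min 1 (R + 1 - ‖x‖)) with hψdef
  have hψc : Continuous ψ :=
    continuous_const.max (continuous_const.min (continuous_const.sub continuous_norm))
  have hψs : HasCompactSupport ψ := by
    refine HasCompactSupport.intro (isCompact_closedBall 0 (R+1)) fun x hx => ?_
    have hx' : R + 1 < ‖x‖ := by
      simpa [mem_closedBall, dist_zero_right] using hx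
    have hmin : min 1 (R + 1 - ‖x‖) ≤ 0 := le_trans (min_le_right _ _) (by linarith)
    simpa [hψdef] using max_eq_left hmin
  have hψnn : ∀ x, 0 ≤ ψ x := fun x => le_max_left _ _
  have hψle : ∀ x, ψ x ≤ 1 := fun x => max_le (by norm_num) (min_le_left _ _)
  have hψ1 : ∀ x ∈ closedBall (0 : Euc (n+1)) R, ψ x = 1 := by
    intro x hx
    have hxn : ‖x‖ ≤ R := mem_closedBall_zero_iff.1 hx
    have h1 : (1:ℝ) ≤ R + 1 - ‖x‖ := by linarith
    rw [hψdef]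
    simp only [min_eq_left h1]
    exact max_eq_right (by norm_num)
  have hCbtend := hconv ψ hψc hψs
  set Cb : ℝ := ∫ x, ψ x ∂ωinf + 1 with hCbdef
  have hCb1 : 1 ≤ Cb := by
    have h0 : 0 ≤ ∫ x, ψ x ∂ωinf := integral_nonneg hψnn
    rw [hCbdef]; linarith
  have hev : ∀ᶠ j in atTop,
      ∫ x, ψ x ∂(ENNReal.ofReal (c j) • ω₁.map (scaleMap ξ (r j))) ≤ Cb :=
    hCbtend.eventually (eventually_le_nhds (lt_add_one _))
  have hbnd : ∀ᶠ j in atTop, c j * (ω₁ (closedBall ξ (r j * R))).toReal ≤ Cb := by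
    filter_upwards [hev] with j hj
    have h2 : (ω₁ (closedBall ξ (r j * R))).toReal ≤ ∫ x, ψ (scaleMap ξ (r j) x) ∂ω₁ := by
      have hind : (ω₁ (closedBall ξ (r j * R))).toReal
          = ∫ x, (closedBall ξ (r j * R)).indicator (fun _ => (1:ℝ)) x ∂ω₁ := by
        rw [integral_indicator_const (1:ℝ) measurableSet_closedBall, smul_eq_mul, mul_one]; rfl
      rw [hind]
      refine integral_mono ((integrable_const (1:ℝ)).indicator measurableSet_closedBall)
        ?_ ?_
      · refine (integrable_const (1:ℝ)).mono'
          ((hψc.comp (hTcont j)).measurable).aestronglyMeasurable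
          (ae_of_all _ fun x => ?_)
        rw [Real.norm_eq_abs, abs_of_nonneg (hψnn _)]
        exact hψle _
      · intro x
        by_cases hx : x ∈ closedBall ξ (r j * R)
        · simp only [Set.indicator_of_mem hx]
          rw [show ψ (scaleMap ξ (r j) x) = 1 from hψ1 _ ((hmem j x).2 hx)]
        · simp only [Set.indicator_of_notMem hx]
          exact hψnn _
    calc c j * (ω₁ (closedBall ξ (r j * R))).toReal
        ≤ c j * ∫ x, ψ (scaleMap ξ (r j) x) ∂ω₁ :=
          mul_le_mul_of_nonneg_left h2 (hc j)
      _ = ∫ x, ψ x ∂(ENNReal.ofReal (c j) • ω₁.map (scaleMap ξ (r j))) :=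
          (hint j ω₁ ψ hψc).symm
      _ ≤ Cb := hj
  -- main difference tends to zero
  have hdiff : Tendsto (fun j => c j * ∫ x, f (scaleMap ξ (r j) x) ∂ω₂
      - h ξ * (c j * ∫ x, f (scaleMap ξ (r j) x) ∂ω₁)) atTop (𝓝 0) := by
    rw [NormedAddCommGroup.tendsto_nhds_zero]
    intro δ hδ
    have hκpos : (0:ℝ) < 3 * h ξ + 5 := by linarith
    set ε : ℝ := min 1 (δ / (2 * (M+1) * (3 * h ξ + 5) * Cb)) with hεdef
    have hεpos : 0 < ε := lt_min one_pos (div_pos hδ (by positivity))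
    have hε1 : ε ≤ 1 := min_le_left _ _
    have hevs := hsR.eventually (evB ε hεpos hε1)
    filter_upwards [hevs, hbnd] with j hj hbj
    have hrhsne : ENNReal.ofReal (ε * (3 * h ξ + 5)) * ω₁ (closedBall ξ (r j * R)) ≠ ∞ :=
      ENNReal.mul_ne_top ENNReal.ofReal_ne_top (measure_ne_top _ _)
    have hbadfin : ω₂ (closedBall ξ (r j * R) \ E)
        + ENNReal.ofReal (h ξ) * ω₁ (closedBall ξ (r j * R) \ E)
        + ∫⁻ x in closedBall ξ (r j * R),
            ((rn x - ENNReal.ofReal (h ξ)) + (ENNReal.ofReal (h ξ) - rn x)) ∂(ω₁.restrict E)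
        ≠ ∞ := ne_top_of_le_ne_top hrhsne hj
    have hDfin : ∫⁻ x in closedBall ξ (r j * R),
        ((rn x - ENNReal.ofReal (h ξ)) + (ENNReal.ofReal (h ξ) - rn x)) ∂(ω₁.restrict E)
        ≠ ∞ := ne_top_of_le_ne_top hbadfin le_add_self
    have hEst := auxEst ω₁ ω₂ hE (measurableSet_closedBall (x := ξ) (ε := r j * R))
      rn hrnm hWD hfin (h ξ) M hpos.le hM
      (fun x => f (scaleMap ξ (r j) x)) ((hf.comp (hTcont j)).measurable)
      (fun x => by simpa [Real.norm_eq_abs] using hM₀ (scaleMap ξ (r j) x))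
      (hg0 j) hDfin
    have hf1 : ω₂ (closedBall ξ (r j * R) \ E) ≠ ∞ := measure_ne_top _ _
    have hf2 : ENNReal.ofReal (h ξ) * ω₁ (closedBall ξ (r j * R) \ E) ≠ ∞ :=
      ENNReal.mul_ne_top hcct (measure_ne_top _ _)
    have hsum : (ω₂ (closedBall ξ (r j * R) \ E)).toReal
        + h ξ * (ω₁ (closedBall ξ (r j * R) \ E)).toReal
        + (∫⁻ x in closedBall ξ (r j * R),
            ((rn x - ENNReal.ofReal (h ξ)) + (ENNReal.ofReal (h ξ) - rn x))
              ∂(ω₁.restrict E)).toReal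
        = (ω₂ (closedBall ξ (r j * R) \ E)
          + ENNReal.ofReal (h ξ) * ω₁ (closedBall ξ (r j * R) \ E)
          + ∫⁻ x in closedBall ξ (r j * R),
              ((rn x - ENNReal.ofReal (h ξ)) + (ENNReal.ofReal (h ξ) - rn x))
                ∂(ω₁.restrict E)).toReal := by
      rw [ENNReal.toReal_add (ENNReal.add_ne_top.2 ⟨hf1, hf2⟩) hDfin,
        ENNReal.toReal_add hf1 hf2, ENNReal.toReal_mul, ENNReal.toReal_ofReal hpos.le]
    have hbR : (ω₂ (closedBall ξ (r j * R) \ E)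
        + ENNReal.ofReal (h ξ) * ω₁ (closedBall ξ (r j * R) \ E)
        + ∫⁻ x in closedBall ξ (r j * R),
            ((rn x - ENNReal.ofReal (h ξ)) + (ENNReal.ofReal (h ξ) - rn x))
              ∂(ω₁.restrict E)).toReal
        ≤ ε * (3 * h ξ + 5) * (ω₁ (closedBall ξ (r j * R))).toReal := by
      have h6 := ENNReal.toReal_mono hrhsne hj
      rwa [ENNReal.toReal_mul, ENNReal.toReal_ofReal (by positivity)] at h6
    have hkey : |c j * ∫ x, f (scaleMap ξ (r j) x) ∂ω₂
        - h ξ * (c j * ∫ x, f (scaleMap ξ (r j) x) ∂ω₁)|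
        ≤ M * (ε * (3 * h ξ + 5)) * (c j * (ω₁ (closedBall ξ (r j * R))).toReal) := by
      have e0 : c j * ∫ x, f (scaleMap ξ (r j) x) ∂ω₂
          - h ξ * (c j * ∫ x, f (scaleMap ξ (r j) x) ∂ω₁)
          = c j * ((∫ x, f (scaleMap ξ (r j) x) ∂ω₂)
            - h ξ * ∫ x, f (scaleMap ξ (r j) x) ∂ω₁) := by ring
      rw [e0, abs_mul, abs_of_nonneg (hc j)]
      calc c j * |(∫ x, f (scaleMap ξ (r j) x) ∂ω₂)
            - h ξ * ∫ x, f (scaleMap ξ (r j) x) ∂ω₁|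
          ≤ c j * (M * ((ω₂ (closedBall ξ (r j * R) \ E)
            + ENNReal.ofReal (h ξ) * ω₁ (closedBall ξ (r j * R) \ E)
            + ∫⁻ x in closedBall ξ (r j * R),
                ((rn x - ENNReal.ofReal (h ξ)) + (ENNReal.ofReal (h ξ) - rn x))
                  ∂(ω₁.restrict E)).toReal)) := by
            refine mul_le_mul_of_nonneg_left ?_ (hc j)
            rw [← hsum]
            exact hEst
        _ ≤ c j * (M * (ε * (3 * h ξ + 5) * (ω₁ (closedBall ξ (r j * R))).toReal)) := by
            refine mul_le_mul_of_nonneg_left (mul_le_mul_of_nonneg_left hbR hM) (hc j)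
        _ = M * (ε * (3 * h ξ + 5)) * (c j * (ω₁ (closedBall ξ (r j * R))).toReal) := by
            ring
    rw [Real.norm_eq_abs]
    have hlast : M * (ε * (3 * h ξ + 5)) * (c j * (ω₁ (closedBall ξ (r j * R))).toReal)
        ≤ M * (ε * (3 * h ξ + 5)) * Cb :=
      mul_le_mul_of_nonneg_left hbj (by positivity)
    have h6 : ε * (2 * (M+1) * (3 * h ξ + 5) * Cb) ≤ δ := by
      have := min_le_right (1:ℝ) (δ / (2 * (M+1) * (3 * h ξ + 5) * Cb))
      rw [hεdef]
      calc min 1 (δ / (2 * (M+1) * (3 * h ξ + 5) * Cb)) * (2 * (M+1) * (3 * h ξ + 5) * Cb)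
          ≤ (δ / (2 * (M+1) * (3 * h ξ + 5) * Cb)) * (2 * (M+1) * (3 * h ξ + 5) * Cb) :=
            mul_le_mul_of_nonneg_right this (by positivity)
        _ = δ := div_mul_cancel₀ δ (by positivity)
    have hfinal : M * (ε * (3 * h ξ + 5)) * Cb < δ := by
      have hCbpos : (0:ℝ) < Cb := lt_of_lt_of_le one_pos hCb1
      nlinarith [mul_pos (mul_pos hεpos hκpos) hCbpos, hM]
    exact lt_of_le_of_lt (hkey.trans hlast) hfinal
  -- conclude
  have := hdiff.add (A.const_mul (h ξ))
  rw [zero_add] at this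
  refine this.congr fun j => ?_
  ring


end
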